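/- If G is a finitely generated group with generating set S and Q is a commensurated subgroup of G, then the Schreier coset graph Λ(S,Q,G) is locally finite: each vertex gQ is adjacent to only finitely many cosets. -/

import Mathlib

open Pointwise

def Commensurated {G : Type*} [Group G] (Q : Subgroup G) : Prop :=
  ∀ g : G, (Q.map (MulAut.conj g).toMonoidHom ⊓ Q).relIndex Q ≠ 0 ∧
    (Q.map (MulAut.conj g).toMonoidHom ⊓ Q).relIndex (Q.map (MulAut.conj g).toMonoidHom) ≠ 0

lemma schreier_aux {G : Type*} [Group G] (Q : Subgroup G) (hQ : Commensurated Q)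
    (g s : G) : {B : Set G | ∃ q ∈ Q, B = (g * q * s) • (Q : Set G)}.Finite := by
  set K : Subgroup Q := ((Q.map (MulAut.conj s).toMonoidHom ⊓ Q).subgroupOf Q) with hK
  have hfin : Finite (Q ⧸ K) := by
    have h := (hQ s).1
    rw [Subgroup.relIndex, Subgroup.index] at h
    exact Nat.finite_of_card_ne_zero h
  have hwd : ∀ a b : Q, (QuotientGroup.leftRel K) a b →
      (g * (a : G) * s) • (Q : Set G) = (g * (b : G) * s) • (Q : Set G) := by
    intro a b hab
    rw [QuotientGroup.leftRel_apply] at hab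
    have hmem : (a : G)⁻¹ * b ∈ Q.map (MulAut.conj s).toMonoidHom ⊓ Q := hab
    obtain ⟨⟨w, hw, hws⟩, -⟩ := hmem
    have : s⁻¹ * ((a : G)⁻¹ * b) * s ∈ Q := by
      have : (a : G)⁻¹ * b = s * w * s⁻¹ := by simpa [MulAut.conj] using hws.symm
      rw [this]; group; simpa using hw
    have key : (g * (a : G) * s)⁻¹ * (g * (b : G) * s) ∈ Q := by
      have : (g * (a : G) * s)⁻¹ * (g * (b : G) * s) = s⁻¹ * ((a : G)⁻¹ * b) * s := by
        group
      rw [this]; exact ‹s⁻¹ * ((a : G)⁻¹ * b) * s ∈ Q›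
    exact (leftCoset_eq_iff Q).mpr (by simpa using key)
  let F : Q ⧸ K → Set G := Quotient.lift (fun q : Q => (g * (q : G) * s) • (Q : Set G)) hwd
  have hsub : {B : Set G | ∃ q ∈ Q, B = (g * q * s) • (Q : Set G)} ⊆ Set.range F := by
    rintro B ⟨q, hq, rfl⟩
    exact ⟨Quotient.mk _ ⟨q, hq⟩, rfl⟩
  exact (Set.finite_range F).subset hsub

/-- The Schreier coset graph `Λ(S,Q,G)` of a commensurated subgroup is locally finite:
each vertex `gQ` is adjacent to only finitely many cosets. -/
theorem schreierGraph_locallyFinite {G : Type*} [Group G]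
    (S : Set G) (hSfin : S.Finite) (hgen : Subgroup.closure S = ⊤)
    (Q : Subgroup G) (hQ : Commensurated Q) (g : G) :
    {B : Set G | ∃ x ∈ g • (Q : Set G), ∃ s ∈ S ∪ S⁻¹, B = (x * s) • (Q : Set G)}.Finite := by
  have hS' : (S ∪ S⁻¹).Finite := hSfin.union hSfin.inv
  have hsub : {B : Set G | ∃ x ∈ g • (Q : Set G), ∃ s ∈ S ∪ S⁻¹, B = (x * s) • (Q : Set G)} ⊆
      ⋃ s ∈ S ∪ S⁻¹, {B : Set G | ∃ q ∈ Q, B = (g * q * s) • (Q : Set G)} := by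
    rintro B ⟨x, hx, s, hs, rfl⟩
    obtain ⟨q, hq, rfl⟩ := hx
    exact Set.mem_biUnion hs ⟨q, hq, by simp [smul_eq_mul]⟩
  exact (hS'.biUnion fun s _ => schreier_aux Q hQ g s).subset hsub
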